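/- For α ∈ (0,1), the function λ ↦ λ^α on [0,∞) admits the Frullani-type representation λ^α = (α sin(απ)/π) ∫₀^∞ log(1 + λ/x) · x^{α-1} dx for all λ ≥ 0. -/

import Mathlib

open Real Set
open MeasureTheory Filter

lemma beta_real {a : ℝ} (ha : a ∈ Ioo (0:ℝ) 1) :
    ∫ x in (0:ℝ)..1, x ^ (a-1) * (1-x) ^ (-a) = π / Real.sin (π * a) := by
  have h1 : (0:ℝ) < a := ha.1
  have h2 : a < 1 := ha.2
  have hB := Complex.Gamma_mul_Gamma_eq_betaIntegral (s := (a:ℂ)) (t := (1 - a : ℂ))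
    (by simpa using h1) (by simp [Complex.sub_re]; linarith)
  rw [show (a:ℂ) + (1 - a) = 1 by ring, Complex.Gamma_one, one_mul] at hB
  have hcoe : Complex.betaIntegral (a:ℂ) (1 - a : ℂ)
      = ((∫ x in (0:ℝ)..1, x ^ (a-1) * (1-x) ^ (-a) : ℝ) : ℂ) := by
    rw [Complex.betaIntegral, ← intervalIntegral.integral_ofReal]
    refine intervalIntegral.integral_congr fun x hx => ?_
    rw [uIcc_of_le (by norm_num)] at hx
    push_cast
    rw [Complex.ofReal_cpow hx.1, Complex.ofReal_cpow (by linarith [hx.2] : (0:ℝ) ≤ 1 - x)]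
    push_cast
    ring_nf
  rw [hcoe] at hB
  have hG : Complex.Gamma (a:ℂ) * Complex.Gamma (1 - (a:ℂ))
      = ((Real.Gamma a * Real.Gamma (1 - a) : ℝ) : ℂ) := by
    push_cast
    rw [Complex.Gamma_ofReal, show (1:ℂ) - a = ((1 - a : ℝ) : ℂ) by push_cast; ring,
      Complex.Gamma_ofReal]
  rw [hG] at hB
  have := Complex.ofReal_injective hB
  rw [← this, Real.Gamma_mul_Gamma_one_sub]

lemma cauchy_like {a : ℝ} (ha : a ∈ Ioo (0:ℝ) 1) :
    ∫ x in Ioi (0:ℝ), x ^ (a-1) / (1+x) = π / Real.sin (π * a) := by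
  have h1 : (0:ℝ) < a := ha.1
  have himg : (fun u : ℝ => u / (1 - u)) '' Ioo 0 1 = Ioi 0 := by
    ext y
    constructor
    · rintro ⟨u, hu, rfl⟩
      exact div_pos hu.1 (by linarith [hu.2])
    · intro hy
      refine ⟨y / (1 + y), ⟨div_pos hy (by linarith [mem_Ioi.mp hy]), ?_⟩, ?_⟩
      · rw [div_lt_one (by linarith [mem_Ioi.mp hy])]; linarith [mem_Ioi.mp hy]
      · have h1y : (0:ℝ) < 1 + y := by linarith [mem_Ioi.mp hy]
        field_simp; ring
  have hderiv : ∀ u ∈ Ioo (0:ℝ) 1, HasDerivWithinAt (fun u : ℝ => u / (1 - u))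
      ((1 - u)⁻¹ ^ 2) (Ioo 0 1) u := by
    intro u hu
    have h1u : (1:ℝ) - u ≠ 0 := by have := hu.2; intro h; linarith [sub_eq_zero.mp h]
    have := (hasDerivAt_id u).div ((hasDerivAt_id u).const_sub 1) h1u
    simp only [one_mul, id] at this
    refine (this.congr_deriv ?_).hasDerivWithinAt
    field_simp; ring
  have hinj : InjOn (fun u : ℝ => u / (1 - u)) (Ioo 0 1) := by
    intro x hx y hy h
    have hx1 : (1:ℝ) - x ≠ 0 := by have := hx.2; intro hh; linarith [sub_eq_zero.mp hh]
    have hy1 : (1:ℝ) - y ≠ 0 := by have := hy.2; intro hh; linarith [sub_eq_zero.mp hh]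
    field_simp at h
    nlinarith [h]
  have key := integral_image_eq_integral_abs_deriv_smul measurableSet_Ioo hderiv hinj
    (fun x : ℝ => x ^ (a-1) / (1+x))
  rw [himg] at key
  rw [key]
  have heq : ∀ u ∈ Ioo (0:ℝ) 1, |(1-u)⁻¹ ^ 2| • ((u / (1-u)) ^ (a-1) / (1 + u / (1-u)))
      = u ^ (a-1) * (1-u) ^ (-a) := by
    intro u hu
    have hu0 : (0:ℝ) < u := hu.1
    have hu1 : (0:ℝ) < 1 - u := by linarith [hu.2]
    have hq : 1 + u / (1-u) = (1-u)⁻¹ := by field_simp; ring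
    rw [hq, Real.div_rpow hu0.le hu1.le, abs_of_nonneg (by positivity), smul_eq_mul, div_div]
    have e1 : (1-u)⁻¹ ^ 2 = (1-u) ^ (-2:ℝ) := by
      rw [inv_pow, ← Real.rpow_natCast (1-u) 2, ← Real.rpow_neg hu1.le]; norm_num
    have e2 : (1-u)⁻¹ = (1-u) ^ (-1:ℝ) := by
      rw [Real.rpow_neg hu1.le, Real.rpow_one]
    rw [e1, e2, ← Real.rpow_add hu1,
      show (-a) = (-2) - (a-1 + -1) by ring, Real.rpow_sub hu1]
    ring
  rw [setIntegral_congr_fun measurableSet_Ioo heq, ← integral_Ioc_eq_integral_Ioo,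
    ← intervalIntegral.integral_of_le (by norm_num : (0:ℝ) ≤ 1)]
  exact beta_real ha

lemma cauchy_like_scaled {a : ℝ} (ha : a ∈ Ioo (0:ℝ) 1) {l : ℝ} (hl : 0 < l) :
    ∫ x in Ioi (0:ℝ), x ^ (a-1) / (x+l) = l ^ (a-1) * (π / Real.sin (π * a)) := by
  have key := MeasureTheory.integral_comp_mul_left_Ioi
    (fun x : ℝ => x ^ (a-1) / (x+l)) 0 hl
  rw [mul_zero] at key
  have heq : ∀ x ∈ Ioi (0:ℝ), (fun x : ℝ => x ^ (a-1) / (x+l)) (l * x)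
      = l ^ (a-2) • (fun x : ℝ => x ^ (a-1) / (1+x)) x := by
    intro x hx
    have hx0 : (0:ℝ) < x := hx
    have h1x : (0:ℝ) < 1 + x := by linarith
    simp only [smul_eq_mul]
    rw [Real.mul_rpow hl.le hx0.le, show l * x + l = l * (1 + x) by ring,
      show l ^ (a-1) = l ^ (a-2) * l ^ (1:ℝ) by rw [← Real.rpow_add hl]; ring_nf,
      Real.rpow_one]
    field_simp
  rw [setIntegral_congr_fun measurableSet_Ioi heq, integral_smul, cauchy_like ha,
    smul_eq_mul] at key
  have hI : (∫ x in Ioi (0:ℝ), x ^ (a-1) / (x+l))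
      = l * (l ^ (a-2) * (π / Real.sin (π * a))) := by
    rw [key, smul_eq_mul, ← mul_assoc, mul_inv_cancel₀ hl.ne', one_mul]
  rw [hI, ← mul_assoc, show l * l ^ (a-2) = l ^ (1:ℝ) * l ^ (a-2) by rw [Real.rpow_one],
    ← Real.rpow_add hl, show (1:ℝ) + (a-2) = a - 1 by ring]

lemma meas_rpow_Ioi {α : ℝ} : ContinuousOn (fun x : ℝ => x ^ (α-1)) (Ioi 0) :=
  continuousOn_id.rpow_const fun x hx => Or.inl (ne_of_gt hx)

lemma int_rat {α l : ℝ} (hα : α ∈ Ioo (0:ℝ) 1) (hl : 0 < l) :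
    IntegrableOn (fun x : ℝ => x ^ (α-1) / (x+l)) (Ioi 0) := by
  have hcont : ContinuousOn (fun x : ℝ => x ^ (α-1) / (x+l)) (Ioi 0) :=
    meas_rpow_Ioi.div ((continuous_id.add continuous_const).continuousOn)
      (fun x hx => by have : (0:ℝ) < x := hx; positivity)
  rw [show Ioi (0:ℝ) = Ioc 0 1 ∪ Ioi 1 from (Ioc_union_Ioi_eq_Ioi zero_le_one).symm]
  refine IntegrableOn.union ?_ ?_
  · refine Integrable.mono' (g := fun x : ℝ => x ^ (α-1) / l) ?_
      (ContinuousOn.aestronglyMeasurable (hcont.mono (fun x hx => hx.1)) measurableSet_Ioc) ?_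
    · have : IntervalIntegrable (fun x : ℝ => x ^ (α-1)) volume 0 1 :=
        intervalIntegral.intervalIntegrable_rpow' (by linarith [hα.1])
      rw [intervalIntegrable_iff_integrableOn_Ioc_of_le zero_le_one] at this
      exact this.div_const _
    · filter_upwards [ae_restrict_mem measurableSet_Ioc] with x hx
      have hx0 : (0:ℝ) < x := hx.1
      rw [norm_of_nonneg (by positivity)]
      gcongr
      linarith
  · refine Integrable.mono' (g := fun x : ℝ => x ^ (α-2)) ?_
      (ContinuousOn.aestronglyMeasurable
        (hcont.mono (fun x hx => show (0:ℝ) < x from lt_trans one_pos hx)) measurableSet_Ioi) ?_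
    · exact integrableOn_Ioi_rpow_of_lt (by linarith [hα.2]) one_pos
    · filter_upwards [ae_restrict_mem measurableSet_Ioi] with x hx
      have hx0 : (0:ℝ) < x := lt_trans one_pos hx
      rw [norm_of_nonneg (by positivity)]
      calc x ^ (α-1) / (x+l) ≤ x ^ (α-1) / x := by
            gcongr
            linarith
        _ = x ^ (α-2) := by
            rw [show α-1 = α-2+1 by ring, Real.rpow_add hx0, Real.rpow_one]
            field_simp

lemma int_log {α l : ℝ} (hα : α ∈ Ioo (0:ℝ) 1) (hl : 0 < l) :
    IntegrableOn (fun x : ℝ => x ^ (α-1) * (Real.log (x+l) - Real.log x)) (Ioi 0) := by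
  have hcont : ContinuousOn (fun x : ℝ => x ^ (α-1) * (Real.log (x+l) - Real.log x)) (Ioi 0) := by
    refine meas_rpow_Ioi.mul (ContinuousOn.sub ?_ ?_)
    · exact ContinuousOn.log ((continuous_id.add continuous_const).continuousOn)
        (fun x hx => by have : (0:ℝ) < x := hx; positivity)
    · exact Real.continuousOn_log.mono (fun x hx => ne_of_gt hx)
  have hlogpos : ∀ x : ℝ, 0 < x → 0 ≤ Real.log (x+l) - Real.log x := by
    intro x hx
    have := Real.log_le_log (by positivity) (by linarith : x ≤ x + l)
    linarith
  rw [show Ioi (0:ℝ) = Ioc 0 1 ∪ Ioi 1 from (Ioc_union_Ioi_eq_Ioi zero_le_one).symm]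
  refine IntegrableOn.union ?_ ?_
  · refine Integrable.mono'
      (g := fun x : ℝ => (2/α * (1+l) ^ (α/2)) * x ^ (α/2-1)) ?_
      (ContinuousOn.aestronglyMeasurable (hcont.mono (fun x hx => hx.1)) measurableSet_Ioc) ?_
    · have : IntervalIntegrable (fun x : ℝ => x ^ (α/2-1)) volume 0 1 :=
        intervalIntegral.intervalIntegrable_rpow' (by linarith [hα.1])
      rw [intervalIntegrable_iff_integrableOn_Ioc_of_le zero_le_one] at this
      exact this.const_mul _
    · filter_upwards [ae_restrict_mem measurableSet_Ioc] with x hx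
      have hx0 : (0:ℝ) < x := hx.1
      have hx1 : x ≤ 1 := hx.2
      have hα0 := hα.1
      have hy : (0:ℝ) < (x+l)/x := by positivity
      rw [norm_of_nonneg (mul_nonneg (by positivity) (hlogpos x hx0))]
      have hlog1 : Real.log (x+l) - Real.log x = Real.log ((x+l)/x) :=
        (Real.log_div (by positivity) hx0.ne').symm
      have h2 : Real.log ((x+l)/x) ≤ 2/α * ((x+l)/x) ^ (α/2) := by
        have h3 := Real.log_le_sub_one_of_pos (Real.rpow_pos_of_pos hy (α/2))
        rw [Real.log_rpow hy] at h3
        have h5 : α/2 * Real.log ((x+l)/x) ≤ ((x+l)/x) ^ (α/2) := by linarith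
        calc Real.log ((x+l)/x) = 2/α * (α/2 * Real.log ((x+l)/x)) := by field_simp
          _ ≤ 2/α * ((x+l)/x) ^ (α/2) := by
              exact mul_le_mul_of_nonneg_left h5 (by positivity)
      have h4 : ((x+l)/x) ^ (α/2) ≤ (1+l) ^ (α/2) * x ^ (-(α/2)) := by
        have hle : (x+l)/x ≤ (1+l)/x := by gcongr
        calc ((x+l)/x) ^ (α/2) ≤ ((1+l)/x) ^ (α/2) :=
              Real.rpow_le_rpow hy.le hle (by positivity)
          _ = (1+l) ^ (α/2) * x ^ (-(α/2)) := by
              rw [Real.div_rpow (by linarith) hx0.le, Real.rpow_neg hx0.le, div_eq_mul_inv]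
      calc x ^ (α-1) * (Real.log (x+l) - Real.log x)
          ≤ x ^ (α-1) * (2/α * ((1+l) ^ (α/2) * x ^ (-(α/2)))) := by
            refine mul_le_mul_of_nonneg_left ?_ (by positivity)
            rw [hlog1]
            calc Real.log ((x+l)/x) ≤ 2/α * ((x+l)/x) ^ (α/2) := h2
              _ ≤ 2/α * ((1+l) ^ (α/2) * x ^ (-(α/2))) :=
                  mul_le_mul_of_nonneg_left h4 (by positivity)
        _ = (2/α * (1+l) ^ (α/2)) * x ^ (α/2-1) := by
            rw [show x ^ (α/2-1) = x ^ (α-1) * x ^ (-(α/2)) by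
              rw [← Real.rpow_add hx0]; ring_nf]
            ring
  · refine Integrable.mono' (g := fun x : ℝ => l * x ^ (α-2)) ?_
      (ContinuousOn.aestronglyMeasurable
        (hcont.mono (fun x hx => show (0:ℝ) < x from lt_trans one_pos hx)) measurableSet_Ioi) ?_
    · exact (integrableOn_Ioi_rpow_of_lt (by linarith [hα.2]) one_pos).const_mul _
    · filter_upwards [ae_restrict_mem measurableSet_Ioi] with x hx
      have hx0 : (0:ℝ) < x := lt_trans one_pos hx
      have hlog : Real.log (x+l) - Real.log x ≤ l / x := by
        rw [← Real.log_div (by positivity) hx0.ne', show (x+l)/x = 1 + l/x by field_simp]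
        have := Real.log_le_sub_one_of_pos (show (0:ℝ) < 1 + l/x by positivity)
        linarith
      rw [norm_of_nonneg (mul_nonneg (by positivity) (hlogpos x hx0))]
      calc x ^ (α-1) * (Real.log (x+l) - Real.log x) ≤ x ^ (α-1) * (l / x) := by
            exact mul_le_mul_of_nonneg_left hlog (by positivity)
        _ = l * x ^ (α-2) := by
            rw [show α-1 = α-2+1 by ring, Real.rpow_add hx0, Real.rpow_one]
            field_simp

lemma parts {α l : ℝ} (hα : α ∈ Ioo (0:ℝ) 1) (hl : 0 < l) :
    ∫ x in Ioi (0:ℝ), x ^ (α-1) * (Real.log (x+l) - Real.log x)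
      = (l/α) * ∫ x in Ioi (0:ℝ), x ^ (α-1) / (x+l) := by
  have hα0 := hα.1
  have hα1 := hα.2
  set F : ℝ → ℝ := fun x => x ^ α / α * (Real.log (x+l) - Real.log x) with hF
  set f' : ℝ → ℝ := fun x =>
    x ^ (α-1) * (Real.log (x+l) - Real.log x) - l/α * (x ^ (α-1) / (x+l)) with hf'
  have hderiv : ∀ x ∈ Ioi (0:ℝ), HasDerivAt F (f' x) x := by
    intro x hx
    have hx0 : (0:ℝ) < x := hx
    have hxl : (0:ℝ) < x + l := by linarith
    have h1 : HasDerivAt (fun x : ℝ => x ^ α) (α * x ^ (α-1)) x :=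
      Real.hasDerivAt_rpow_const (Or.inl hx0.ne')
    have h2 : HasDerivAt (fun x : ℝ => Real.log (x+l) - Real.log x)
        ((x+l)⁻¹ - x⁻¹) x := by
      have ha : HasDerivAt (fun x : ℝ => Real.log (x+l)) ((x+l)⁻¹) x := by
        have := (((hasDerivAt_id x).add_const l).log hxl.ne')
        simpa using this
      have hb : HasDerivAt Real.log x⁻¹ x := Real.hasDerivAt_log hx0.ne'
      exact ha.sub hb
    have h := (h1.div_const α).mul h2
    refine h.congr_deriv ?_
    rw [hf']
    have e1 : x ^ α = x ^ (α-1) * x := by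
      rw [show α = α-1+1 by ring, Real.rpow_add hx0, Real.rpow_one]
      ring_nf
    simp only [e1]
    field_simp
    ring
  have hcont : ContinuousWithinAt F (Ici 0) 0 := by
    rw [ContinuousWithinAt, ← Set.Ioi_insert, nhdsWithin_insert]
    have hF0 : F 0 = 0 := by
      simp [hF, Real.zero_rpow hα0.ne']
    rw [hF0]
    refine Filter.Tendsto.sup (by simpa [hF0] using tendsto_pure_nhds F 0) ?_
    have hFeq : ∀ x : ℝ, F x = (x ^ α * Real.log (x+l) - Real.log x * x ^ α) / α := by
      intro x; rw [hF]; ring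
    refine Filter.Tendsto.congr (fun x => (hFeq x).symm) ?_
    rw [show (0:ℝ) = (0 - 0)/α by simp]
    refine Filter.Tendsto.div_const ?_ α
    refine Filter.Tendsto.sub ?_ ?_
    · have ha : Tendsto (fun x : ℝ => x ^ α) (nhdsWithin 0 (Ioi 0)) (nhds 0) := by
        have h := (Real.continuousAt_rpow_const 0 α (Or.inr hα0.le)).continuousWithinAt
          (s := Ioi (0:ℝ))
        unfold ContinuousWithinAt at h
        simpa [Real.zero_rpow hα0.ne'] using h
      have hb : Tendsto (fun x : ℝ => Real.log (x+l)) (nhdsWithin 0 (Ioi 0)) (nhds (Real.log l)) := by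
        have : ContinuousAt (fun x : ℝ => Real.log (x+l)) 0 := by
          apply ContinuousAt.log
          · exact (continuous_id.add continuous_const).continuousAt
          · simpa using hl.ne'
        have h := this.continuousWithinAt (s := Ioi (0:ℝ))
        unfold ContinuousWithinAt at h
        simpa using h
      simpa using ha.mul hb
    · simpa using tendsto_log_mul_rpow_nhdsGT_zero hα0
  have htop : Tendsto F atTop (nhds 0) := by
    have hbound : ∀ᶠ x : ℝ in atTop, F x ≤ (l/α) * x ^ (α-1) := by
      filter_upwards [eventually_gt_atTop (0:ℝ)] with x hx0
      have hlog : Real.log (x+l) - Real.log x ≤ l / x := by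
        rw [← Real.log_div (by positivity) hx0.ne', show (x+l)/x = 1 + l/x by field_simp]
        have := Real.log_le_sub_one_of_pos (show (0:ℝ) < 1 + l/x by positivity)
        linarith
      have hxα : (0:ℝ) ≤ x ^ α / α := by positivity
      calc F x ≤ x ^ α / α * (l / x) := mul_le_mul_of_nonneg_left hlog hxα
        _ = (l/α) * x ^ (α-1) := by
            rw [show α = α-1+1 by ring, Real.rpow_add hx0, Real.rpow_one]
            field_simp
            ring
    have hpos : ∀ᶠ x : ℝ in atTop, 0 ≤ F x := by
      filter_upwards [eventually_gt_atTop (0:ℝ)] with x hx0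
      have : Real.log x ≤ Real.log (x+l) := Real.log_le_log hx0 (by linarith)
      have hxα : (0:ℝ) ≤ x ^ α / α := by positivity
      exact mul_nonneg hxα (by linarith)
    have hmaj : Tendsto (fun x : ℝ => (l/α) * x ^ (α-1)) atTop (nhds 0) := by
      rw [show (0:ℝ) = (l/α) * 0 by ring]
      refine Tendsto.const_mul _ ?_
      have := tendsto_rpow_neg_atTop (show (0:ℝ) < 1 - α by linarith)
      simpa [show -(1-α) = α - 1 by ring] using this
    exact tendsto_of_tendsto_of_tendsto_of_le_of_le' tendsto_const_nhds hmaj hpos hbound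
  have hint : IntegrableOn f' (Ioi 0) :=
    (int_log hα hl).sub ((int_rat hα hl).const_mul (l/α))
  have key := MeasureTheory.integral_Ioi_of_hasDerivAt_of_tendsto hcont hderiv hint htop
  have hF0 : F 0 = 0 := by simp [hF, Real.zero_rpow hα0.ne']
  rw [hF0, zero_sub, neg_zero] at key
  rw [hf'] at key
  rw [integral_sub (int_log hα hl) ((int_rat hα hl).const_mul (l/α)),
    integral_const_mul] at key
  linarith [key]

/-- Frullani/Thorin representation of `λ^α`:
`λ^α = (α sin(απ)/π) ∫₀^∞ log(1 + λ/x) x^{α-1} dx` for `λ ≥ 0`, `α ∈ (0,1)`. -/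
theorem rpow_eq_thorin_integral (α : ℝ) (hα : α ∈ Ioo (0:ℝ) 1) (l : ℝ) (hl : 0 ≤ l) :
    l ^ α =
      α * Real.sin (α * π) / π *
        ∫ x in Ioi (0:ℝ), Real.log (1 + l / x) * x ^ (α - 1) := by
  have hα0 := hα.1
  have hα1 := hα.2
  rcases eq_or_lt_of_le hl with rfl | hl'
  · have : ∀ x ∈ Ioi (0:ℝ), Real.log (1 + (0:ℝ) / x) * x ^ (α - 1) = 0 := by
      intro x hx
      simp
    rw [setIntegral_congr_fun measurableSet_Ioi this, integral_zero, mul_zero,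
      Real.zero_rpow hα0.ne']
  · have hsin : 0 < Real.sin (π * α) := by
      apply Real.sin_pos_of_pos_of_lt_pi
      · positivity
      · nlinarith [Real.pi_pos]
    have hcongr : ∀ x ∈ Ioi (0:ℝ), Real.log (1 + l / x) * x ^ (α - 1)
        = x ^ (α-1) * (Real.log (x+l) - Real.log x) := by
      intro x hx
      have hx0 : (0:ℝ) < x := hx
      rw [show 1 + l / x = (x+l)/x by field_simp,
        Real.log_div (by positivity) hx0.ne']
      ring
    rw [setIntegral_congr_fun measurableSet_Ioi hcongr, parts hα hl',
      cauchy_like_scaled hα hl']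
    rw [show π * α = α * π from mul_comm _ _] at hsin ⊢
    have hπ := Real.pi_pos
    field_simp
    rw [show l ^ α = l ^ (1:ℝ) * l ^ (α-1) by
      rw [← Real.rpow_add hl']; norm_num, Real.rpow_one]
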